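/- Bound on the pureness of the final state: for any state ρ_S on C^{d_S}, any Hamiltonian H on C^d with thermal state ρ_R = e^{−βH}/tr(e^{−βH}) at β ≥ 0, and any unitary U on C^{d_S} ⊗ C^d, the final system state ρ'_S = tr_R[U(ρ_S ⊗ ρ_R)U†] satisfies λ_min(ρ'_S) ≥ e^{−β(H_max − H_min)} λ_min(ρ_S), where H_min, H_max are the minimal and maximal eigenvalues of H and λ_min denotes the smallest eigenvalue. -/

import Mathlib

open scoped Kronecker ComplexOrder
open Matrix

noncomputable def matfun {n : Type*} [Fintype n] [DecidableEq n] (f : ℝ → ℝ)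
    (A : Matrix n n ℂ) : Matrix n n ℂ :=
  if h : A.IsHermitian then
    (h.eigenvectorUnitary : Matrix n n ℂ) * Matrix.diagonal (fun i => (f (h.eigenvalues i) : ℂ)) *
      (star (h.eigenvectorUnitary : Matrix n n ℂ))
  else 0

noncomputable def mlog {n : Type*} [Fintype n] [DecidableEq n] (A : Matrix n n ℂ) : Matrix n n ℂ :=
  matfun Real.log A

noncomputable def mexp {n : Type*} [Fintype n] [DecidableEq n] (β : ℝ) (H : Matrix n n ℂ) : Matrix n n ℂ :=
  matfun (fun x => Real.exp (-β * x)) H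

noncomputable def gibbs {n : Type*} [Fintype n] [DecidableEq n] (β : ℝ) (H : Matrix n n ℂ) : Matrix n n ℂ :=
  ((mexp β H).trace)⁻¹ • mexp β H

noncomputable def entropy {n : Type*} [Fintype n] [DecidableEq n] (ρ : Matrix n n ℂ) : ℝ :=
  -((ρ * mlog ρ).trace).re

noncomputable def relEnt {n : Type*} [Fintype n] [DecidableEq n] (σ ρ : Matrix n n ℂ) : ℝ :=
  ((σ * (mlog σ - mlog ρ)).trace).re

def IsState {n : Type*} [Fintype n] (ρ : Matrix n n ℂ) : Prop := ρ.PosSemidef ∧ ρ.trace = 1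

noncomputable def trR {a b : Type*} [Fintype a] [Fintype b]
    (ρ : Matrix (a × b) (a × b) ℂ) : Matrix a a ℂ :=
  Matrix.of fun i j => ∑ k, ρ (i, k) (j, k)

noncomputable def trL {a b : Type*} [Fintype a] [Fintype b]
    (ρ : Matrix (a × b) (a × b) ℂ) : Matrix b b ℂ :=
  Matrix.of fun i j => ∑ k, ρ (k, i) (k, j)

noncomputable def mutInfo {a b : Type*} [Fintype a] [Fintype b] [DecidableEq a] [DecidableEq b]
    (ρ : Matrix (a × b) (a × b) ℂ) : ℝ :=
  entropy (trR ρ) + entropy (trL ρ) - entropy ρ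


noncomputable def lammin {n : Type*} [Fintype n] [DecidableEq n] [Nonempty n]
    (A : Matrix n n ℂ) : ℝ :=
  if h : A.IsHermitian then ⨅ i, h.eigenvalues i else 0

section AuxLemmas
set_option linter.unusedSectionVars false
open Matrix

variable {n : Type*} [Fintype n] [DecidableEq n]

lemma aux_psd_smul {M : Matrix n n ℂ} (hM : M.PosSemidef) {c : ℝ} (hc : 0 ≤ c) :
    ((c : ℂ) • M).PosSemidef := by
  refine Matrix.PosSemidef.of_dotProduct_mulVec_nonneg ?_ ?_
  · show ((c:ℂ) • M)ᴴ = _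
    rw [Matrix.conjTranspose_smul, hM.1.eq]
    simp
  · intro x
    rw [Matrix.smul_mulVec, dotProduct_smul, smul_eq_mul]
    exact mul_nonneg (by exact_mod_cast hc) (hM.dotProduct_mulVec_nonneg x)

lemma aux_shift_psd {V : Matrix n n ℂ} (hV : V * star V = 1) (g : n → ℝ) {c : ℝ}
    (hg : ∀ i, c ≤ g i) :
    (V * Matrix.diagonal (fun i => (g i : ℂ)) * star V - (c : ℂ) • 1).PosSemidef := by
  have key : V * Matrix.diagonal (fun i => (g i : ℂ)) * star V - (c : ℂ) • 1
      = V * Matrix.diagonal (fun i => ((g i - c : ℝ) : ℂ)) * star V := by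
    have hd : Matrix.diagonal (fun i => ((g i - c : ℝ) : ℂ))
        = Matrix.diagonal (fun i => (g i : ℂ)) - (c : ℂ) • 1 := by
      ext i j
      rcases eq_or_ne i j with rfl | h
      · simp only [Matrix.diagonal_apply_eq, Matrix.sub_apply, Matrix.smul_apply,
          Matrix.one_apply_eq, smul_eq_mul, mul_one]
        push_cast; ring
      · simp [Matrix.diagonal_apply_ne _ h, Matrix.one_apply_ne h]
    rw [hd, Matrix.mul_sub, Matrix.sub_mul, Matrix.mul_smul, Matrix.smul_mul, Matrix.mul_one, hV]
  rw [key]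
  have hdg : (Matrix.diagonal (fun i => ((g i - c : ℝ) : ℂ))).PosSemidef := by
    refine Matrix.PosSemidef.diagonal ?_
    rw [Pi.le_def]
    intro i
    rw [Pi.zero_apply]
    exact_mod_cast sub_nonneg.mpr (hg i)
  simpa [Matrix.star_eq_conjTranspose] using hdg.mul_mul_conjTranspose_same V

set_option linter.unusedSectionVars false
variable {n : Type*} [Fintype n] [DecidableEq n]

lemma aux_lammin_ge [Nonempty n] {A : Matrix n n ℂ} (hA : A.IsHermitian) {c : ℝ}
    (h : (A - (c : ℂ) • 1).PosSemidef) : c ≤ lammin A := by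
  rw [lammin, dif_pos hA]
  refine le_ciInf fun i => ?_
  set v : n → ℂ := ⇑(hA.eigenvectorBasis i) with hv
  have hAv : A *ᵥ v = ((hA.eigenvalues i : ℂ)) • v := by
    rw [hv, hA.mulVec_eigenvectorBasis]
    ext j
    simp [Complex.real_smul]
  have hnorm : star v ⬝ᵥ v = 1 := by
    have h1 : (inner ℂ (hA.eigenvectorBasis i) (hA.eigenvectorBasis i) : ℂ) = 1 := by
      simpa using orthonormal_iff_ite.mp hA.eigenvectorBasis.orthonormal i i
    rw [EuclideanSpace.inner_eq_star_dotProduct] at h1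
    rw [dotProduct_comm]
    exact h1
  have hq := h.dotProduct_mulVec_nonneg v
  rw [Matrix.sub_mulVec, Matrix.smul_mulVec, Matrix.one_mulVec, hAv,
    dotProduct_sub, dotProduct_smul, dotProduct_smul, hnorm] at hq
  simp only [smul_eq_mul, mul_one] at hq
  have : (0 : ℂ) ≤ ((hA.eigenvalues i - c : ℝ) : ℂ) := by push_cast; exact hq
  rw [Complex.zero_le_real] at this
  linarith

variable {a b : Type*} [Fintype a] [Fintype b]

lemma aux_trR_sub (M N : Matrix (a × b) (a × b) ℂ) : trR (M - N) = trR M - trR N := by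
  ext i j; simp [trR, Finset.sum_sub_distrib]

lemma aux_trR_smul (c : ℂ) (M : Matrix (a × b) (a × b) ℂ) : trR (c • M) = c • trR M := by
  ext i j; simp [trR, Finset.mul_sum]

lemma aux_trR_one [DecidableEq a] [DecidableEq b] :
    trR (1 : Matrix (a × b) (a × b) ℂ) = (Fintype.card b : ℂ) • 1 := by
  ext i j
  simp only [trR, Matrix.of_apply, Matrix.smul_apply, Matrix.one_apply, Prod.mk.injEq, smul_eq_mul]
  rcases eq_or_ne i j with rfl | h
  · simp [Finset.card_univ]
  · simp [h]

lemma aux_trR_psd [DecidableEq b] {M : Matrix (a × b) (a × b) ℂ} (hM : M.PosSemidef) : (trR M).PosSemidef := by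
  refine Matrix.PosSemidef.of_dotProduct_mulVec_nonneg ?_ ?_
  · show (trR M)ᴴ = trR M
    ext i j
    simp only [Matrix.conjTranspose_apply, trR, Matrix.of_apply, star_sum]
    exact Finset.sum_congr rfl fun k _ => hM.1.apply _ _
  · intro x
    classical
    set y : b → (a × b) → ℂ := fun k p => if p.2 = k then x p.1 else 0 with hy
    have hR : ∀ k : b, star (y k) ⬝ᵥ (M *ᵥ y k)
        = ∑ i, ∑ j, star (x i) * (M (i, k) (j, k) * x j) := by
      intro k
      simp only [dotProduct, Matrix.mulVec, Pi.star_apply, hy, Fintype.sum_prod_type,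
        apply_ite (star : ℂ → ℂ), star_zero, ite_mul, zero_mul, mul_ite, mul_zero,
        Finset.sum_ite_eq', Finset.mem_univ, if_true, Finset.mul_sum]
      refine Finset.sum_congr rfl fun i _ => ?_
      rw [Finset.sum_comm]
      simp [Finset.sum_ite_eq']
    have hL : star x ⬝ᵥ (trR M *ᵥ x) = ∑ i, ∑ k, ∑ j, star (x i) * (M (i, k) (j, k) * x j) := by
      simp only [dotProduct, Matrix.mulVec, trR, Matrix.of_apply, Pi.star_apply,
        Finset.sum_mul, Finset.mul_sum]
      exact Finset.sum_congr rfl fun i _ => Finset.sum_comm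
    rw [hL]
    have hswap : ∑ i, ∑ k, ∑ j, star (x i) * (M (i, k) (j, k) * x j)
        = ∑ k, ∑ i, ∑ j, star (x i) * (M (i, k) (j, k) * x j) := Finset.sum_comm
    rw [hswap]
    refine Finset.sum_nonneg fun k _ => ?_
    rw [← hR k]
    exact hM.dotProduct_mulVec_nonneg _

lemma aux_star_kron {a b : Type*} [Fintype a] [Fintype b]
    (A : Matrix a a ℂ) (B : Matrix b b ℂ) : star (A ⊗ₖ B) = star A ⊗ₖ star B := by
  ext p q
  simp [Matrix.star_eq_conjTranspose, Matrix.conjTranspose_apply, Matrix.kroneckerMap_apply,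
    mul_comm]

end AuxLemmas

theorem pureness_bound {dS d : ℕ} [NeZero dS] [NeZero d] (β : ℝ) (hβ : 0 ≤ β)
    (H : Matrix (Fin d) (Fin d) ℂ) (hH : H.IsHermitian)
    (ρS : Matrix (Fin dS) (Fin dS) ℂ) (hS : IsState ρS)
    (U : Matrix (Fin dS × Fin d) (Fin dS × Fin d) ℂ)
    (hU : U ∈ Matrix.unitaryGroup (Fin dS × Fin d) ℂ) :
    let ρR := gibbs β H
    let ρ' := U * (ρS ⊗ₖ ρR) * star U
    let Hmin := ⨅ i, hH.eigenvalues i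
    let Hmax := ⨆ i, hH.eigenvalues i
    Real.exp (-β * (Hmax - Hmin)) * lammin ρS ≤ lammin (trR ρ') := by
  intro ρR ρ' Hmin Hmax
  have hd : 0 < d := Nat.pos_of_ne_zero (NeZero.ne d)
  have hdS : 0 < dS := Nat.pos_of_ne_zero (NeZero.ne dS)
  haveI : Nonempty (Fin d) := ⟨⟨0, hd⟩⟩
  haveI : Nonempty (Fin dS) := ⟨⟨0, hdS⟩⟩
  have hρS : ρS.IsHermitian := hS.1.1
  set eS : Fin dS → ℝ := hρS.eigenvalues with heS
  set eH : Fin d → ℝ := hH.eigenvalues with heH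
  set a : ℝ := lammin ρS with ha
  have ha_def : a = ⨅ i, eS i := by rw [ha, lammin, dif_pos hρS]
  have ha_le : ∀ i, a ≤ eS i := fun i => ha_def ▸ ciInf_le (Finite.bddBelow_range _) i
  have ha_nonneg : 0 ≤ a := ha_def ▸ le_ciInf fun i => hS.1.eigenvalues_nonneg i
  have hHmin : ∀ k, Hmin ≤ eH k := fun k => ciInf_le (Finite.bddBelow_range _) k
  have hHmax : ∀ k, eH k ≤ Hmax := fun k => le_ciSup (Finite.bddAbove_range _) k
  set VH : Matrix (Fin d) (Fin d) ℂ := (hH.eigenvectorUnitary : Matrix (Fin d) (Fin d) ℂ)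
    with hVH
  have hVHmem : VH ∈ Matrix.unitaryGroup (Fin d) ℂ := hH.eigenvectorUnitary.2
  have hmexp : mexp β H = VH * Matrix.diagonal (fun k => (Real.exp (-β * eH k) : ℂ)) * star VH := by
    rw [mexp, matfun, dif_pos hH]
  set Zr : ℝ := ∑ k, Real.exp (-β * eH k) with hZr
  have hZr_pos : 0 < Zr := Finset.sum_pos (fun k _ => Real.exp_pos _) ⟨_, Finset.mem_univ default⟩
  have hZtr : (mexp β H).trace = (Zr : ℂ) := by
    rw [hmexp, Matrix.trace_mul_cycle, Matrix.mem_unitaryGroup_iff'.mp hVHmem, Matrix.one_mul,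
      Matrix.trace_diagonal, hZr]
    norm_cast
  set gR : Fin d → ℝ := fun k => Zr⁻¹ * Real.exp (-β * eH k) with hgR
  have hρR : ρR = VH * Matrix.diagonal (fun k => (gR k : ℂ)) * star VH := by
    show gibbs β H = _
    rw [gibbs, hZtr, hmexp, ← Matrix.smul_mul, ← Matrix.mul_smul]
    congr 2
    ext i j
    rcases eq_or_ne i j with rfl | hij
    · simp only [Matrix.smul_apply, Matrix.diagonal_apply_eq, smul_eq_mul, hgR]
      push_cast
      ring
    · simp [Matrix.diagonal_apply_ne _ hij]
  -- structure of ρS ⊗ ρR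
  set VS : Matrix (Fin dS) (Fin dS) ℂ := (hρS.eigenvectorUnitary : Matrix (Fin dS) (Fin dS) ℂ)
    with hVS
  have hVSmem : VS ∈ Matrix.unitaryGroup (Fin dS) ℂ := hρS.eigenvectorUnitary.2
  set W : Matrix (Fin dS × Fin d) (Fin dS × Fin d) ℂ := VS ⊗ₖ VH with hW
  have hWU : W * star W = 1 := by
    rw [hW, aux_star_kron, ← Matrix.mul_kronecker_mul, Matrix.mem_unitaryGroup_iff.mp hVSmem,
      Matrix.mem_unitaryGroup_iff.mp hVHmem, Matrix.one_kronecker_one]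
  set g : Fin dS × Fin d → ℝ := fun p => eS p.1 * gR p.2 with hg
  have hMstruct : ρS ⊗ₖ ρR = W * Matrix.diagonal (fun p => (g p : ℂ)) * star W := by
    conv_lhs => rw [hρS.spectral_theorem, hρR, Unitary.conjStarAlgAut_apply]
    rw [hW, aux_star_kron, Matrix.mul_kronecker_mul, Matrix.mul_kronecker_mul,
      Matrix.diagonal_kronecker_diagonal]
    congr 2
    ext p
    simp [hg, heS]
  set cR : ℝ := Zr⁻¹ * Real.exp (-β * Hmax) with hcR
  have hcR_nonneg : 0 ≤ cR := mul_nonneg (inv_nonneg.mpr hZr_pos.le) (Real.exp_pos _).le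
  have hgR_ge : ∀ k, cR ≤ gR k := fun k => by
    refine mul_le_mul_of_nonneg_left ?_ (inv_nonneg.mpr hZr_pos.le)
    exact Real.exp_le_exp.mpr (by nlinarith [hHmax k])
  have hg_ge : ∀ p, a * cR ≤ g p := fun p =>
    mul_le_mul (ha_le p.1) (hgR_ge p.2) hcR_nonneg (ha_nonneg.trans (ha_le p.1))
  have h1 : (ρS ⊗ₖ ρR - ((a * cR : ℝ) : ℂ) • 1).PosSemidef := by
    rw [hMstruct]
    exact aux_shift_psd hWU g hg_ge
  have h2 : (ρ' - ((a * cR : ℝ) : ℂ) • 1).PosSemidef := by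
    have heq : ρ' - ((a * cR : ℝ) : ℂ) • 1
        = U * (ρS ⊗ₖ ρR - ((a * cR : ℝ) : ℂ) • 1) * star U := by
      rw [Matrix.mul_sub, Matrix.sub_mul, Matrix.mul_smul, Matrix.mul_one, Matrix.smul_mul,
        Matrix.mem_unitaryGroup_iff.mp hU]
    rw [heq]
    simpa [Matrix.star_eq_conjTranspose] using h1.mul_mul_conjTranspose_same U
  have h3 : (trR ρ' - ((d * (a * cR) : ℝ) : ℂ) • 1).PosSemidef := by
    have h4 := aux_trR_psd h2
    rw [aux_trR_sub, aux_trR_smul, aux_trR_one, smul_smul] at h4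
    convert h4 using 3
    push_cast [Fintype.card_fin]
    ring
  have hHerm : (trR ρ').IsHermitian := by
    have h5 : trR ρ' = (trR ρ' - ((d * (a * cR) : ℝ) : ℂ) • 1) + ((d * (a * cR) : ℝ) : ℂ) • 1 :=
      (sub_add_cancel _ _).symm
    rw [h5]
    exact h3.1.add (aux_psd_smul Matrix.PosSemidef.one
      (mul_nonneg (Nat.cast_nonneg _) (mul_nonneg ha_nonneg hcR_nonneg) : (0:ℝ) ≤ d * (a * cR))).1
  have hfinal : (d : ℝ) * (a * cR) ≤ lammin (trR ρ') := aux_lammin_ge hHerm (by exact_mod_cast h3)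
  refine le_trans ?_ hfinal
  -- arithmetic
  have hZle : Zr ≤ d * Real.exp (-β * Hmin) := by
    rw [hZr]
    calc ∑ k, Real.exp (-β * eH k) ≤ ∑ _k : Fin d, Real.exp (-β * Hmin) :=
          Finset.sum_le_sum fun k _ => Real.exp_le_exp.mpr (by nlinarith [hHmin k])
      _ = d * Real.exp (-β * Hmin) := by simp [Finset.sum_const, mul_comm]
  have hexp : Real.exp (β * Hmin) ≤ d * Zr⁻¹ := by
    have h7 : Real.exp (β * Hmin) * Zr ≤ d :=
      calc Real.exp (β * Hmin) * Zr ≤ Real.exp (β * Hmin) * (d * Real.exp (-β * Hmin)) :=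
            mul_le_mul_of_nonneg_left hZle (Real.exp_pos _).le
        _ = d := by rw [mul_comm, mul_assoc, ← Real.exp_add]; simp
    calc Real.exp (β * Hmin) = Real.exp (β * Hmin) * Zr * Zr⁻¹ := by field_simp
      _ ≤ (d : ℝ) * Zr⁻¹ := mul_le_mul_of_nonneg_right h7 (inv_nonneg.mpr hZr_pos.le)
  have hsplit : Real.exp (-β * (Hmax - Hmin)) = Real.exp (-β * Hmax) * Real.exp (β * Hmin) := by
    rw [← Real.exp_add]; ring_nf
  rw [hsplit, hcR]
  have h6 : Real.exp (-β * Hmax) * Real.exp (β * Hmin) * a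
      ≤ Real.exp (-β * Hmax) * (d * Zr⁻¹) * a :=
    mul_le_mul_of_nonneg_right (mul_le_mul_of_nonneg_left hexp (Real.exp_pos _).le) ha_nonneg
  calc Real.exp (-β * Hmax) * Real.exp (β * Hmin) * a ≤ Real.exp (-β * Hmax) * (d * Zr⁻¹) * a :=
        h6
    _ = (d : ℝ) * (a * (Zr⁻¹ * Real.exp (-β * Hmax))) := by ring
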